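/- arXiv:1009.3891 — 2 statements merged into one kernel-verified Lean document; each statement's English description precedes it below -/
import Mathlib

section
/- More capable comparison of BEC and BSC: let p ∈ [0,1/2] and ε ∈ [0,1] with ε ≤ h₂(p). Then for every distribution of the {0,1}-valued random variable A, with B = BEC(ε)(A) and E = BSC(p)(A), one has I(A;B) ≥ I(A;E). Conversely, if ε > h₂(p) and A is uniform on {0,1}, then I(A;B) = 1 − ε < 1 − h₂(p) = I(A;E), so B fails to be more capable than E. -/
noncomputable section

namespace SLSC

open scoped BigOperators

variable {Ω : Type*} [Fintype Ω]

open Classical in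
/-- Probability that the random variable `f` takes the value `x`, under the
probability mass function `w` on the finite sample space `Ω`. -/
def pr {X : Type*} (w : Ω → ℝ) (f : Ω → X) (x : X) : ℝ :=
  ∑ ω, if f ω = x then w ω else 0

/-- `w` is a probability mass function on `Ω`. -/
def IsPMF (w : Ω → ℝ) : Prop := (∀ ω, 0 ≤ w ω) ∧ ∑ ω, w ω = 1

/-- Shannon entropy (base 2) of the random variable `f`. -/
def H {X : Type*} [Fintype X] (w : Ω → ℝ) (f : Ω → X) : ℝ :=
  -∑ x, pr w f x * Real.logb 2 (pr w f x)

/-- Conditional entropy `H(f | g)` (base 2). -/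
def condH {X Y : Type*} [Fintype X] [Fintype Y] (w : Ω → ℝ) (f : Ω → X) (g : Ω → Y) : ℝ :=
  H w (fun ω => (f ω, g ω)) - H w g

/-- Mutual information `I(f ; g)` (base 2). -/
def MI {X Y : Type*} [Fintype X] [Fintype Y] (w : Ω → ℝ) (f : Ω → X) (g : Ω → Y) : ℝ :=
  H w f + H w g - H w (fun ω => (f ω, g ω))

/-- Conditional mutual information `I(f ; g | h)` (base 2). -/
def condMI {X Y Z : Type*} [Fintype X] [Fintype Y] [Fintype Z]
    (w : Ω → ℝ) (f : Ω → X) (g : Ω → Y) (h : Ω → Z) : ℝ :=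
  condH w f h - condH w f (fun ω => (g ω, h ω))

/-- Expectation of the real random variable `f`. -/
def expect (w : Ω → ℝ) (f : Ω → ℝ) : ℝ := ∑ ω, w ω * f ω

/-- Markov chain `f – g – h` : `f` and `h` are conditionally independent given `g`. -/
def Markov {X Y Z : Type*} (w : Ω → ℝ) (f : Ω → X) (g : Ω → Y) (h : Ω → Z) : Prop :=
  ∀ x y z,
    pr w (fun ω => (f ω, g ω, h ω)) (x, y, z) * pr w g y
      = pr w (fun ω => (f ω, g ω)) (x, y) * pr w (fun ω => (g ω, h ω)) (y, z)

/-- Markov chain `f – g – h – k` : each variable is conditionally independent of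
the preceding ones given its immediate predecessor. -/
def Markov4 {X Y Z T : Type*} (w : Ω → ℝ)
    (f : Ω → X) (g : Ω → Y) (h : Ω → Z) (k : Ω → T) : Prop :=
  Markov w f g h ∧ Markov w (fun ω => (f ω, g ω)) h k

variable {𝒜 ℬ ℰ : Type*} [Fintype 𝒜] [Fintype ℬ] [Fintype ℰ]

/-- Weight of the i.i.d. source `(Aⁿ,Bⁿ,Eⁿ)` with per-letter distribution `p`. -/
def iidW (p : 𝒜 × ℬ × ℰ → ℝ) (n : ℕ) : (Fin n → 𝒜 × ℬ × ℰ) → ℝ :=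
  fun ω => ∏ i, p (ω i)

/-- Alice's source sequence `Aⁿ`. -/
def An (n : ℕ) : (Fin n → 𝒜 × ℬ × ℰ) → Fin n → 𝒜 := fun ω i => (ω i).1

/-- Bob's side-information sequence `Bⁿ`. -/
def Bn (n : ℕ) : (Fin n → 𝒜 × ℬ × ℰ) → Fin n → ℬ := fun ω i => (ω i).2.1

/-- Eve's side-information sequence `Eⁿ`. -/
def En (n : ℕ) : (Fin n → 𝒜 × ℬ × ℰ) → Fin n → ℰ := fun ω i => (ω i).2.2

/-- `(R,D,Δ)` is achievable for the memoryless source `p` with distortion measure `d`: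
for every `ε > 0` there is an `(n, R+ε)`-code (encoder `f`, decoder `g`, at most
`2^{n(R+ε)}` messages) whose expected distortion at Bob is at most `D + ε` and whose
normalized equivocation at Eve is at least `Δ - ε`. -/
def Achievable (p : 𝒜 × ℬ × ℰ → ℝ) (d : 𝒜 → 𝒜 → ℝ) (R D Δ : ℝ) : Prop :=
  ∀ ε > (0 : ℝ), ∃ n M : ℕ, 0 < n ∧ 0 < M ∧
    (M : ℝ) ≤ (2 : ℝ) ^ ((n : ℝ) * (R + ε)) ∧
    ∃ (f : (Fin n → 𝒜) → Fin M) (g : Fin M → (Fin n → ℬ) → Fin n → 𝒜),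
      expect (iidW p n)
          (fun ω => ((n : ℝ))⁻¹ * ∑ i, d (An n ω i) (g (f (An n ω)) (Bn n ω) i)) ≤ D + ε ∧
      Δ - ε ≤ ((n : ℝ))⁻¹ * condH (iidW p n) (An n) (fun ω => (f (An n ω), En n ω))

/-- The single-letter region of Theorem 1, with auxiliary alphabets `Fin m` (for `U`)
and `Fin k` (for `V`): there is a joint pmf `q` of `(U,V,A,B,E)` with marginal `p`
on `(A,B,E)`, a Markov chain `U – V – A – (B,E)`, and a function `Â : 𝒱 × ℬ → 𝒜`
such that `R ≥ I(V;A|B)`, `D ≥ E[d(A, Â(V,B))]` and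
`Δ ≤ [H(A|V,B) + I(A;B|U) - I(A;E|U)]₊`. -/
def InRegion (p : 𝒜 × ℬ × ℰ → ℝ) (d : 𝒜 → 𝒜 → ℝ) (R D Δ : ℝ) (m k : ℕ) : Prop :=
  ∃ (q : Fin m × Fin k × 𝒜 × ℬ × ℰ → ℝ) (Ahat : Fin k × ℬ → 𝒜),
    IsPMF q ∧
    (∀ x : 𝒜 × ℬ × ℰ, pr q (fun ω => ω.2.2) x = p x) ∧
    Markov4 q (fun ω => ω.1) (fun ω => ω.2.1) (fun ω => ω.2.2.1) (fun ω => ω.2.2.2) ∧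
    condMI q (fun ω => ω.2.1) (fun ω => ω.2.2.1) (fun ω => ω.2.2.2.1) ≤ R ∧
    expect q (fun ω => d ω.2.2.1 (Ahat (ω.2.1, ω.2.2.2.1))) ≤ D ∧
    Δ ≤ max (condH q (fun ω => ω.2.2.1) (fun ω => (ω.2.1, ω.2.2.2.1))
          + condMI q (fun ω => ω.2.2.1) (fun ω => ω.2.2.2.1) (fun ω => ω.1)
          - condMI q (fun ω => ω.2.2.1) (fun ω => ω.2.2.2.2) (fun ω => ω.1)) 0

/-- Side information `B` (second coordinate) is less noisy than `E` (third coordinate):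
`I(U;B) ≥ I(U;E)` for every `U` such that `U – A – (B,E)` is a Markov chain. -/
def LessNoisyBE (p : 𝒜 × ℬ × ℰ → ℝ) : Prop :=
  ∀ (m : ℕ) (q : Fin m × 𝒜 × ℬ × ℰ → ℝ), IsPMF q →
    (∀ x, pr q (fun ω => ω.2) x = p x) →
    Markov q (fun ω => ω.1) (fun ω => ω.2.1) (fun ω => ω.2.2) →
    MI q (fun ω => ω.1) (fun ω => ω.2.2.2) ≤ MI q (fun ω => ω.1) (fun ω => ω.2.2.1)

/-- Side information `E` (third coordinate) is less noisy than `B` (second coordinate):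
`I(U;E) ≥ I(U;B)` for every `U` such that `U – A – (B,E)` is a Markov chain. -/
def LessNoisyEB (p : 𝒜 × ℬ × ℰ → ℝ) : Prop :=
  ∀ (m : ℕ) (q : Fin m × 𝒜 × ℬ × ℰ → ℝ), IsPMF q →
    (∀ x, pr q (fun ω => ω.2) x = p x) →
    Markov q (fun ω => ω.1) (fun ω => ω.2.1) (fun ω => ω.2.2) →
    MI q (fun ω => ω.1) (fun ω => ω.2.2.1) ≤ MI q (fun ω => ω.1) (fun ω => ω.2.2.2)

/-- The auxiliary random variable `Uᵢ = (W, B_{i+1}ⁿ, E^{i-1})` where `W = f(Aⁿ)`. -/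
def auxU {𝒲 : Type*} (n : ℕ) (f : (Fin n → 𝒜) → 𝒲) (i : Fin n)
    (ω : Fin n → 𝒜 × ℬ × ℰ) :
    𝒲 × ({j : Fin n // i < j} → ℬ) × ({j : Fin n // j < i} → ℰ) :=
  (f (An n ω), fun j => (ω j.1).2.1, fun j => (ω j.1).2.2)

/-- The auxiliary random variable `Vᵢ = (W, A^{i-1}, B^{i-1}, B_{i+1}ⁿ, E^{i-1})`
where `W = f(Aⁿ)`. -/
def auxV {𝒲 : Type*} (n : ℕ) (f : (Fin n → 𝒜) → 𝒲) (i : Fin n)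
    (ω : Fin n → 𝒜 × ℬ × ℰ) :
    𝒲 × ({j : Fin n // j < i} → 𝒜) × ({j : Fin n // j < i} → ℬ)
      × ({j : Fin n // i < j} → ℬ) × ({j : Fin n // j < i} → ℰ) :=
  (f (An n ω), fun j => (ω j.1).1, fun j => (ω j.1).2.1,
    fun j => (ω j.1).2.1, fun j => (ω j.1).2.2)

/-- Binary symmetric channel with crossover probability `p`: `BSC p a e` is the
probability that the output is `e` given that the input is `a`. -/
def BSC (p : ℝ) (a e : Bool) : ℝ := if e = a then 1 - p else p

/-- Binary erasure channel with erasure probability `ε` (output `none` is the erasure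
symbol): `BEC ε a b` is the probability that the output is `b` given input `a`. -/
def BEC (ε : ℝ) (a : Bool) (b : Option Bool) : ℝ :=
  match b with
  | some b' => if b' = a then 1 - ε else 0
  | none => ε

/-- Binary entropy function (base 2). -/
def h2 (x : ℝ) : ℝ := -(x * Real.logb 2 x) - (1 - x) * Real.logb 2 (1 - x)

/-- `sop a b = a ⋆ b = a(1-b) + (1-a)b`. -/
def sop (a b : ℝ) : ℝ := a * (1 - b) + (1 - a) * b

/-- Hamming distortion on `Bool`. -/
def hamming (a a' : Bool) : ℝ := if a = a' then 0 else 1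

/-- Joint distribution of `(A,B,E)` for a uniform binary source `A`, with
`B = BEC(ε)(A)` at Bob and `E = BSC(p)(A)` at Eve (independent channel noises). -/
def binSrc (p ε : ℝ) : Bool × Option Bool × Bool → ℝ :=
  fun x => (1 / 2) * BEC ε x.1 x.2.1 * BSC p x.1 x.2.2

/-- Joint distribution of `(U,V,A,B,E)` in the achievability scheme for the binary
example: `A` uniform, `V = A ⊕ Z_α`, `U = V ⊕ Z_β`, `B = BEC(ε)(A)`, `E = A ⊕ N_p`,
with all noises mutually independent.  Coordinates: `(u,v,a,b,e)`. -/
def exJoint (p ε α β : ℝ) : Bool × Bool × Bool × Option Bool × Bool → ℝ :=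
  fun x =>
    (1 / 2) * BSC α x.2.2.1 x.2.1 * BSC β x.2.1 x.1
      * BEC ε x.2.2.1 x.2.2.2.1 * BSC p x.2.2.1 x.2.2.2.2


/-! ### Auxiliary lemmas for `bec_more_capable_than_bsc` -/

private lemma logb_mul_nn {a b : ℝ} (ha : 0 ≤ a) (hb : 0 ≤ b) :
    a * b * Real.logb 2 (a * b) = a * b * Real.logb 2 a + a * b * Real.logb 2 b := by
  rcases eq_or_lt_of_le ha with rfl | h
  · simp
  rcases eq_or_lt_of_le hb with rfl | h'
  · simp
  rw [Real.logb_mul h.ne' h'.ne']; ring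

/-- The joint weight of `(A,B,E)` for input distribution `qA`. -/
private def Wgt (p ε : ℝ) (qA : Bool → ℝ) : Bool × Option Bool × Bool → ℝ :=
  fun x => qA x.1 * BEC ε x.1 x.2.1 * BSC p x.1 x.2.2

private lemma prA (p ε : ℝ) (qA : Bool → ℝ) (a : Bool) :
    pr (Wgt p ε qA) (fun ω => ω.1) a = qA a := by
  cases a <;>
    simp [pr, Wgt, BEC, BSC, Fintype.sum_prod_type, Fintype.sum_option, Fintype.sum_bool] <;>
    ring

private lemma MI_AE (p ε : ℝ) (hp0 : 0 ≤ p) (hp1 : p ≤ 1) (qA : Bool → ℝ)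
    (h0 : 0 ≤ qA true) (h0f : 0 ≤ qA false) (h1 : qA false = 1 - qA true) :
    MI (Wgt p ε qA) (fun ω => ω.1) (fun ω => ω.2.2)
      = h2 (sop (qA true) p) - h2 p := by
  have hq1 : qA true ≤ 1 := by linarith
  have eA1 : pr (Wgt p ε qA) (fun ω => ω.1) true = qA true := prA ..
  have eA0 : pr (Wgt p ε qA) (fun ω => ω.1) false = 1 - qA true := by rw [prA, h1]
  have eE1 : pr (Wgt p ε qA) (fun ω => ω.2.2) true = sop (qA true) p := by
    simp [pr, Wgt, BEC, BSC, sop, Fintype.sum_prod_type, Fintype.sum_option,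
      Fintype.sum_bool, h1]; ring
  have eE0 : pr (Wgt p ε qA) (fun ω => ω.2.2) false = 1 - sop (qA true) p := by
    simp [pr, Wgt, BEC, BSC, sop, Fintype.sum_prod_type, Fintype.sum_option,
      Fintype.sum_bool, h1]; ring
  have eJtt : pr (Wgt p ε qA) (fun ω => (ω.1, ω.2.2)) (true, true) = qA true * (1 - p) := by
    simp [pr, Wgt, BEC, BSC, Fintype.sum_prod_type, Fintype.sum_option,
      Fintype.sum_bool]; ring
  have eJtf : pr (Wgt p ε qA) (fun ω => (ω.1, ω.2.2)) (true, false) = qA true * p := by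
    simp [pr, Wgt, BEC, BSC, Fintype.sum_prod_type, Fintype.sum_option,
      Fintype.sum_bool]; ring
  have eJft : pr (Wgt p ε qA) (fun ω => (ω.1, ω.2.2)) (false, true) = (1 - qA true) * p := by
    simp [pr, Wgt, BEC, BSC, Fintype.sum_prod_type, Fintype.sum_option,
      Fintype.sum_bool, h1]; ring
  have eJff : pr (Wgt p ε qA) (fun ω => (ω.1, ω.2.2)) (false, false)
      = (1 - qA true) * (1 - p) := by
    simp [pr, Wgt, BEC, BSC, Fintype.sum_prod_type, Fintype.sum_option,
      Fintype.sum_bool, h1]; ring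
  simp only [MI, H, Fintype.sum_bool, Fintype.sum_prod_type]
  rw [eA1, eA0, eE1, eE0, eJtt, eJtf, eJft, eJff,
    logb_mul_nn h0 (by linarith : (0:ℝ) ≤ 1 - p),
    logb_mul_nn h0 hp0,
    logb_mul_nn (by linarith : (0:ℝ) ≤ 1 - qA true) hp0,
    logb_mul_nn (by linarith : (0:ℝ) ≤ 1 - qA true) (by linarith : (0:ℝ) ≤ 1 - p)]
  simp only [h2, sop]
  ring

private lemma MI_AB (p ε : ℝ) (he0 : 0 ≤ ε) (he1 : ε ≤ 1) (qA : Bool → ℝ)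
    (h0 : 0 ≤ qA true) (h0f : 0 ≤ qA false) (h1 : qA false = 1 - qA true) :
    MI (Wgt p ε qA) (fun ω => ω.1) (fun ω => ω.2.1)
      = (1 - ε) * h2 (qA true) := by
  have hq1 : qA true ≤ 1 := by linarith
  have eA1 : pr (Wgt p ε qA) (fun ω => ω.1) true = qA true := prA ..
  have eA0 : pr (Wgt p ε qA) (fun ω => ω.1) false = 1 - qA true := by rw [prA, h1]
  have eBn : pr (Wgt p ε qA) (fun ω => ω.2.1) none = ε := by
    simp [pr, Wgt, BEC, BSC, Fintype.sum_prod_type, Fintype.sum_option,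
      Fintype.sum_bool, h1]; ring
  have eBt : pr (Wgt p ε qA) (fun ω => ω.2.1) (some true) = (1 - ε) * qA true := by
    simp [pr, Wgt, BEC, BSC, Fintype.sum_prod_type, Fintype.sum_option,
      Fintype.sum_bool]; ring
  have eBf : pr (Wgt p ε qA) (fun ω => ω.2.1) (some false) = (1 - ε) * (1 - qA true) := by
    simp [pr, Wgt, BEC, BSC, Fintype.sum_prod_type, Fintype.sum_option,
      Fintype.sum_bool, h1]; ring
  have eJtn : pr (Wgt p ε qA) (fun ω => (ω.1, ω.2.1)) (true, none) = qA true * ε := by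
    simp [pr, Wgt, BEC, BSC, Fintype.sum_prod_type, Fintype.sum_option,
      Fintype.sum_bool]; ring
  have eJtt : pr (Wgt p ε qA) (fun ω => (ω.1, ω.2.1)) (true, some true)
      = qA true * (1 - ε) := by
    simp [pr, Wgt, BEC, BSC, Fintype.sum_prod_type, Fintype.sum_option,
      Fintype.sum_bool]; ring
  have eJtf : pr (Wgt p ε qA) (fun ω => (ω.1, ω.2.1)) (true, some false) = 0 := by
    simp [pr, Wgt, BEC, BSC, Fintype.sum_prod_type, Fintype.sum_option, Fintype.sum_bool]
  have eJfn : pr (Wgt p ε qA) (fun ω => (ω.1, ω.2.1)) (false, none)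
      = (1 - qA true) * ε := by
    simp [pr, Wgt, BEC, BSC, Fintype.sum_prod_type, Fintype.sum_option,
      Fintype.sum_bool, h1]; ring
  have eJft : pr (Wgt p ε qA) (fun ω => (ω.1, ω.2.1)) (false, some true) = 0 := by
    simp [pr, Wgt, BEC, BSC, Fintype.sum_prod_type, Fintype.sum_option, Fintype.sum_bool]
  have eJff : pr (Wgt p ε qA) (fun ω => (ω.1, ω.2.1)) (false, some false)
      = (1 - qA true) * (1 - ε) := by
    simp [pr, Wgt, BEC, BSC, Fintype.sum_prod_type, Fintype.sum_option,
      Fintype.sum_bool, h1]; ring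
  simp only [MI, H, Fintype.sum_bool, Fintype.sum_option, Fintype.sum_prod_type]
  rw [eA1, eA0, eBn, eBt, eBf, eJtn, eJtt, eJtf, eJfn, eJft, eJff,
    logb_mul_nn (by linarith : (0:ℝ) ≤ 1 - ε) h0,
    logb_mul_nn (by linarith : (0:ℝ) ≤ 1 - ε) (by linarith : (0:ℝ) ≤ 1 - qA true),
    logb_mul_nn h0 he0,
    logb_mul_nn h0 (by linarith : (0:ℝ) ≤ 1 - ε),
    logb_mul_nn (by linarith : (0:ℝ) ≤ 1 - qA true) he0,
    logb_mul_nn (by linarith : (0:ℝ) ≤ 1 - qA true) (by linarith : (0:ℝ) ≤ 1 - ε)]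
  simp only [h2]
  ring


/-! ### The key analytic inequality: `h2 (sop q p) ≤ h2 q + h2 p - h2 q * h2 p` -/

/-- Natural-logarithm binary entropy. -/
private def Hn (x : ℝ) : ℝ := -(x * Real.log x) - (1 - x) * Real.log (1 - x)

private lemma Hn_continuous : Continuous Hn := by
  have hc1 : Continuous fun x : ℝ => (1 - x) * Real.log (1 - x) :=
    Real.continuous_mul_log.comp (continuous_const.sub continuous_id)
  exact (Real.continuous_mul_log.neg).sub hc1

private lemma Hn_deriv {x : ℝ} (h0 : 0 < x) (h1 : x < 1) :
    HasDerivAt Hn (Real.log (1 - x) - Real.log x) x := by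
  have h1' : (1 : ℝ) - x ≠ 0 := (by linarith : (0:ℝ) < 1 - x).ne' 
  have d1 : HasDerivAt (fun y : ℝ => y * Real.log y) (Real.log x + 1) x :=
    Real.hasDerivAt_mul_log h0.ne'
  have d2 : HasDerivAt (fun y : ℝ => 1 - y) (-1) x := (hasDerivAt_id x).const_sub 1
  have d3 : HasDerivAt (fun y : ℝ => (1 - y) * Real.log (1 - y))
      ((Real.log (1 - x) + 1) * (-1)) x := by
    simpa [Function.comp_def] using (Real.hasDerivAt_mul_log h1').comp x d2
  have d4 := (d1.neg).sub d3
  have heq : -(Real.log x + 1) - (Real.log (1 - x) + 1) * (-1)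
      = Real.log (1 - x) - Real.log x := by ring
  exact heq ▸ d4

private lemma Hn_nonneg {x : ℝ} (h0 : 0 ≤ x) (h1 : x ≤ 1) : 0 ≤ Hn x := by
  have l1 : Real.log x ≤ 0 := Real.log_nonpos h0 h1
  have l2 : Real.log (1 - x) ≤ 0 := Real.log_nonpos (by linarith) (by linarith)
  have m1 : x * Real.log x ≤ 0 := mul_nonpos_of_nonneg_of_nonpos h0 l1
  have m2 : (1 - x) * Real.log (1 - x) ≤ 0 :=
    mul_nonpos_of_nonneg_of_nonpos (by linarith) l2
  unfold Hn; linarith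

private lemma Hn_zero : Hn 0 = 0 := by simp [Hn]

private lemma Hn_half : Hn (1/2 : ℝ) = Real.log 2 := by
  have h : ((1:ℝ)/2) = 2⁻¹ := by norm_num
  have h2 : (1:ℝ) - 2⁻¹ = 2⁻¹ := by norm_num
  rw [Hn, h, h2, Real.log_inv]; ring

private lemma h2_eq_Hn (x : ℝ) : h2 x = Hn x / Real.log 2 := by
  have hL : Real.log 2 ≠ 0 := by
    have := Real.log_pos one_lt_two; linarith
  rw [h2, Hn, Real.logb, Real.logb]; field_simp

private lemma h2_half : h2 (1/2 : ℝ) = 1 := by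
  rw [h2_eq_Hn, Hn_half, div_self (by have := Real.log_pos one_lt_two; linarith)]

private lemma h2_one_sub (x : ℝ) : h2 (1 - x) = h2 x := by
  rw [h2, h2, show (1:ℝ) - (1 - x) = x by ring]; ring

private lemma key_half (p q : ℝ) (hp0 : 0 ≤ p) (hp2 : p ≤ 1/2)
    (hq0 : 0 ≤ q) (hq2 : q ≤ 1/2) :
    h2 (sop q p) ≤ h2 q + h2 p - h2 q * h2 p := by
  rcases eq_or_lt_of_le hp0 with h | hp0'
  · -- p = 0
    have e1 : sop q 0 = q := by rw [sop]; ring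
    have e2 : h2 (0:ℝ) = 0 := by simp [h2]
    rw [← h, e1, e2]; nlinarith []
  rcases eq_or_lt_of_le hp2 with h | hp2'
  · -- p = 1/2
    have e1 : sop q (1/2) = 1/2 := by rw [sop]; ring
    rw [h, e1, h2_half]; nlinarith []
  -- main case 0 < p < 1/2
  set L := Real.log 2 with hLdef
  have hL : 0 < L := Real.log_pos one_lt_two
  set c := L - Hn p with hcdef
  set t := 1 - 2*p with htdef
  have ht0 : 0 < t := by rw [htdef]; linarith
  have ht1 : t ≤ 1 := by rw [htdef]; linarith
  have hHnp : 0 ≤ Hn p := Hn_nonneg hp0 (by linarith)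
  set G : ℝ → ℝ := fun x => c * Hn x + L * Hn p - L * Hn (p + t*x) with hGdef
  set G' : ℝ → ℝ := fun x => c * (Real.log (1-x) - Real.log x)
      - L * t * (Real.log (1 - (p + t*x)) - Real.log (p + t*x)) with hG'def
  -- it suffices to show `0 ≤ G x` on `[0,1/2]`
  suffices hGoal : ∀ x ∈ Set.Icc (0:ℝ) (1/2), 0 ≤ G x by
    have hGq := hGoal q ⟨hq0, hq2⟩
    have hs : sop q p = p + t * q := by rw [sop, htdef]; ring
    rw [hs, h2_eq_Hn, h2_eq_Hn, h2_eq_Hn]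
    have hL2 : (0:ℝ) < L^2 := by positivity
    have hexp : Hn q / L + Hn p / L - Hn q / L * (Hn p / L) - Hn (p + t*q) / L
        = G q / L^2 := by
      rw [hGdef, hcdef]; field_simp; ring
    have := div_nonneg hGq (le_of_lt hL2)
    rw [← hexp] at this
    rw [← hLdef]
    linarith
  -- derivative facts
  have hsbound : ∀ x : ℝ, 0 < x → x ≤ 1/2 → 0 < p + t*x ∧ p + t*x < 1 := by
    intro x hx0 hx2
    constructor
    · nlinarith
    · nlinarith
  have hder : ∀ x : ℝ, 0 < x → x ≤ 1/2 → HasDerivAt G (G' x) x := by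
    intro x hx0 hx2
    obtain ⟨hs0, hs1⟩ := hsbound x hx0 hx2
    have hx1 : x < 1 := by linarith
    have hinner2 : HasDerivAt (fun y : ℝ => p + t*y) t x := by
      simpa using ((hasDerivAt_id x).const_mul t).const_add p
    have d1 := ((Hn_deriv hx0 hx1).const_mul c).add_const (L * Hn p)
    have d3 : HasDerivAt (fun y : ℝ => Hn (p + t*y))
        ((Real.log (1 - (p + t*x)) - Real.log (p + t*x)) * t) x := by
      simpa [Function.comp_def] using (Hn_deriv hs0 hs1).comp x hinner2
    have total := d1.sub (d3.const_mul L)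
    have heq : c * (Real.log (1-x) - Real.log x)
        - L * ((Real.log (1 - (p + t*x)) - Real.log (p + t*x)) * t) = G' x := by
      rw [hG'def]; ring
    rw [hGdef, hG'def]
    rw [hG'def] at heq
    exact heq ▸ total
  have hder2 : ∀ x : ℝ, 0 < x → x ≤ 1/2 →
      HasDerivAt G' ((L*t^2*(x*(1-x)) - c*((p+t*x)*(1-(p+t*x))))
        / ((x*(1-x)) * ((p+t*x)*(1-(p+t*x))))) x := by
    intro x hx0 hx2
    obtain ⟨hs0, hs1⟩ := hsbound x hx0 hx2
    have hx1 : x < 1 := by linarith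
    have h1x : (0:ℝ) < 1 - x := by linarith
    have h1s : (0:ℝ) < 1 - (p + t*x) := by linarith
    have hinner2 : HasDerivAt (fun y : ℝ => p + t*y) t x := by
      simpa using ((hasDerivAt_id x).const_mul t).const_add p
    have hlog1 : HasDerivAt (fun y : ℝ => Real.log (1-y)) ((1-x)⁻¹ * (-1)) x := by
      simpa [Function.comp_def] using (Real.hasDerivAt_log h1x.ne').comp x ((hasDerivAt_id x).const_sub 1)
    have hlog2 : HasDerivAt (fun y : ℝ => Real.log y) x⁻¹ x := Real.hasDerivAt_log hx0.ne'
    have hlog3 : HasDerivAt (fun y : ℝ => Real.log (1 - (p + t*y)))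
        ((1 - (p + t*x))⁻¹ * (-t)) x := by
      simpa [Function.comp_def] using (Real.hasDerivAt_log h1s.ne').comp x (hinner2.const_sub 1)
    have hlog4 : HasDerivAt (fun y : ℝ => Real.log (p + t*y)) ((p + t*x)⁻¹ * t) x := by
      simpa [Function.comp_def] using (Real.hasDerivAt_log hs0.ne').comp x hinner2
    have total := ((hlog1.sub hlog2).const_mul c).sub
      ((hlog3.sub hlog4).const_mul (L*t))
    have heq : c * ((1-x)⁻¹ * (-1) - x⁻¹)
        - L*t * ((1 - (p + t*x))⁻¹ * (-t) - (p + t*x)⁻¹ * t)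
        = (L*t^2*(x*(1-x)) - c*((p+t*x)*(1-(p+t*x))))
          / ((x*(1-x)) * ((p+t*x)*(1-(p+t*x)))) := by
      generalize p + t*x = s at hs0 h1s ⊢
      field_simp
      ring
    rw [hG'def]
    exact heq ▸ total
  -- continuity
  have hGcont : Continuous G := by
    rw [hGdef]
    exact ((continuous_const.mul Hn_continuous).add continuous_const).sub
      (continuous_const.mul (Hn_continuous.comp
        (continuous_const.add (continuous_const.mul continuous_id))))
  -- special values
  have hG0 : G 0 = 0 := by
    rw [hGdef]; simp [Hn_zero]
  have hGhalf : G (1/2 : ℝ) = 0 := by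
    have hhalf : p + t * (1/2) = 1/2 := by rw [htdef]; ring
    rw [hGdef]; simp only; rw [hhalf, Hn_half, ← hLdef, hcdef]; ring
  -- minimum
  obtain ⟨q₀, hq₀mem, hq₀min⟩ :=
    (isCompact_Icc : IsCompact (Set.Icc (0:ℝ) (1/2))).exists_isMinOn
      ⟨0, by constructor <;> norm_num⟩ hGcont.continuousOn
  suffices h0G : 0 ≤ G q₀ by
    intro x hx
    exact le_trans h0G (isMinOn_iff.mp hq₀min x hx)
  by_contra hneg
  push_neg at hneg
  have hq₀0 : 0 < q₀ := by
    rcases eq_or_lt_of_le hq₀mem.1 with h | h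
    · rw [← h, hG0] at hneg; exact absurd hneg (lt_irrefl 0)
    · exact h
  have hq₀half : q₀ < 1/2 := by
    rcases eq_or_lt_of_le hq₀mem.2 with h | h
    · rw [h, hGhalf] at hneg; exact absurd hneg (lt_irrefl 0)
    · exact h
  have hloc : IsLocalMin G q₀ := hq₀min.isLocalMin (Icc_mem_nhds hq₀0 hq₀half)
  have hG'q₀ : G' q₀ = 0 := hloc.hasDerivAt_eq_zero (hder q₀ hq₀0 hq₀half.le)
  have hG'half : G' (1/2 : ℝ) = 0 := by
    have hhalf : p + t * (1/2) = 1/2 := by rw [htdef]; ring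
    rw [hG'def]; simp only; rw [hhalf]; norm_num
  have hident : ∀ x : ℝ, (p + t*x)*(1-(p+t*x)) = p*(1-p) + t^2*(x*(1-x)) := by
    intro x; rw [htdef]; ring
  have hcA : ∀ x : ℝ, c * (t^2*(x*(1-x)))
      = L*(t^2*(x*(1-x))) - Hn p * (t^2*(x*(1-x))) := by
    intro x; rw [hcdef]; ring
  rcases le_or_gt (c * (p*(1-p))) (Hn p * t^2 * (q₀*(1-q₀))) with hcase | hcase
  · -- Case A : convex to the right of q₀
    have hnn : ∀ x ∈ Set.Ioo q₀ (1/2 : ℝ),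
        0 ≤ L*t^2*(x*(1-x)) - c*((p+t*x)*(1-(p+t*x))) := by
      intro x hx
      have hphi : Hn p * t^2 * (q₀*(1-q₀)) ≤ Hn p * t^2 * (x*(1-x)) := by
        have h1 : 0 ≤ (x - q₀) * (1 - x - q₀) :=
          mul_nonneg (by linarith [hx.1]) (by linarith [hx.2, hq₀half])
        linarith [mul_nonneg (mul_nonneg hHnp (sq_nonneg t)) h1]
      rw [hident x]
      have := hcA x
      linarith [hphi, hcase, this]
    have hmono : MonotoneOn G' (Set.Icc q₀ (1/2)) := by
      apply monotoneOn_of_deriv_nonneg (convex_Icc _ _)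
      · intro x hx
        exact (hder2 x (lt_of_lt_of_le hq₀0 hx.1) hx.2).continuousAt.continuousWithinAt
      · intro x hx
        rw [interior_Icc] at hx
        exact (hder2 x (lt_trans hq₀0 hx.1) hx.2.le).differentiableAt.differentiableWithinAt
      · intro x hx
        rw [interior_Icc] at hx
        have hd := hder2 x (lt_trans hq₀0 hx.1) hx.2.le
        rw [hd.deriv]
        have hx0 : 0 < x := lt_trans hq₀0 hx.1
        obtain ⟨hs0, hs1⟩ := hsbound x hx0 hx.2.le
        apply div_nonneg (hnn x hx)
        have : 0 < (x*(1-x)) * ((p+t*x)*(1-(p+t*x))) :=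
          mul_pos (mul_pos hx0 (by linarith [hx.2] : (0:ℝ) < 1 - x))
            (mul_pos hs0 (by linarith))
        linarith
    have hG'le : ∀ x ∈ Set.Icc q₀ (1/2 : ℝ), G' x ≤ 0 := by
      intro x hx
      have := hmono hx ⟨le_trans hx.1 hx.2, le_refl _⟩ hx.2
      rw [hG'half] at this; exact this
    have hanti : AntitoneOn G (Set.Icc q₀ (1/2)) := by
      apply antitoneOn_of_deriv_nonpos (convex_Icc _ _) (hGcont.continuousOn)
      · intro x hx
        rw [interior_Icc] at hx
        exact (hder x (lt_trans hq₀0 hx.1) hx.2.le).differentiableAt.differentiableWithinAt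
      · intro x hx
        rw [interior_Icc] at hx
        rw [(hder x (lt_trans hq₀0 hx.1) hx.2.le).deriv]
        exact hG'le x ⟨hx.1.le, hx.2.le⟩
    have := hanti ⟨le_refl _, hq₀half.le⟩ ⟨hq₀half.le, le_refl _⟩ hq₀half.le
    rw [hGhalf] at this
    linarith
  · -- Case B : concave to the left of q₀
    have hnp : ∀ x ∈ Set.Ioo (0:ℝ) q₀,
        L*t^2*(x*(1-x)) - c*((p+t*x)*(1-(p+t*x))) ≤ 0 := by
      intro x hx
      have hphi : Hn p * t^2 * (x*(1-x)) ≤ Hn p * t^2 * (q₀*(1-q₀)) := by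
        have h1 : 0 ≤ (q₀ - x) * (1 - q₀ - x) :=
          mul_nonneg (by linarith [hx.2]) (by linarith [hx.2, hq₀half])
        linarith [mul_nonneg (mul_nonneg hHnp (sq_nonneg t)) h1]
      rw [hident x]
      have := hcA x
      linarith [hphi, hcase, this]
    have hanti' : AntitoneOn G' (Set.Ioc 0 q₀) := by
      apply antitoneOn_of_deriv_nonpos (convex_Ioc _ _)
      · intro x hx
        exact (hder2 x hx.1 (le_trans hx.2 hq₀half.le)).continuousAt.continuousWithinAt
      · intro x hx
        rw [interior_Ioc] at hx
        exact (hder2 x hx.1 (le_trans hx.2.le hq₀half.le)).differentiableAt.differentiableWithinAt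
      · intro x hx
        rw [interior_Ioc] at hx
        have hd := hder2 x hx.1 (le_trans hx.2.le hq₀half.le)
        rw [hd.deriv]
        obtain ⟨hs0, hs1⟩ := hsbound x hx.1 (le_trans hx.2.le hq₀half.le)
        apply div_nonpos_of_nonpos_of_nonneg (hnp x hx)
        have : 0 < (x*(1-x)) * ((p+t*x)*(1-(p+t*x))) :=
          mul_pos (mul_pos hx.1 (by linarith [hx.2, hq₀half] : (0:ℝ) < 1 - x))
            (mul_pos hs0 (by linarith))
        linarith
    have hG'ge : ∀ x ∈ Set.Ioc (0:ℝ) q₀, 0 ≤ G' x := by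
      intro x hx
      have := hanti' hx ⟨hq₀0, le_refl _⟩ hx.2
      rw [hG'q₀] at this; exact this
    have hmonoG : MonotoneOn G (Set.Ioc 0 q₀) := by
      apply monotoneOn_of_deriv_nonneg (convex_Ioc _ _) (hGcont.continuousOn)
      · intro x hx
        rw [interior_Ioc] at hx
        exact (hder x hx.1 (le_trans hx.2.le hq₀half.le)).differentiableAt.differentiableWithinAt
      · intro x hx
        rw [interior_Ioc] at hx
        rw [(hder x hx.1 (le_trans hx.2.le hq₀half.le)).deriv]
        exact hG'ge x ⟨hx.1, hx.2.le⟩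
    have hmem : Set.Ioc (0:ℝ) q₀ ∈ nhdsWithin (0:ℝ) (Set.Ioi 0) := by
      rw [← Set.Ioi_inter_Iic]
      exact Filter.inter_mem self_mem_nhdsWithin
        (mem_nhdsWithin_of_mem_nhds (Iic_mem_nhds hq₀0))
    have hlim : Filter.Tendsto G (nhdsWithin 0 (Set.Ioi 0)) (nhds (G 0)) :=
      (hGcont.continuousAt).continuousWithinAt
    have hle : G 0 ≤ G q₀ := by
      apply le_of_tendsto hlim
      exact Filter.eventually_of_mem hmem
        (fun x hx => hmonoG hx ⟨hq₀0, le_refl _⟩ hx.2)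
    rw [hG0] at hle
    linarith

private lemma key (p q : ℝ) (hp0 : 0 ≤ p) (hp2 : p ≤ 1/2)
    (hq0 : 0 ≤ q) (hq1 : q ≤ 1) :
    h2 (sop q p) ≤ h2 q + h2 p - h2 q * h2 p := by
  rcases le_or_gt q (1/2) with h | h
  · exact key_half p q hp0 hp2 hq0 h
  · have hsym : sop q p = 1 - sop (1 - q) p := by rw [sop, sop]; ring
    have := key_half p (1 - q) hp0 hp2 (by linarith) (by linarith)
    rw [hsym, h2_one_sub, ← h2_one_sub q]
    convert this using 2


private lemma h2_nonneg {x : ℝ} (h0 : 0 ≤ x) (h1 : x ≤ 1) : 0 ≤ h2 x := by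
  rw [h2_eq_Hn]; exact div_nonneg (Hn_nonneg h0 h1) (Real.log_nonneg one_le_two)

/-- **More capable comparison of BEC and BSC**: if `ε ≤ h₂(p)` then `I(A;B) ≥ I(A;E)`
for every distribution of the binary input `A` (with `B = BEC(ε)(A)`,
`E = BSC(p)(A)`); conversely, if `ε > h₂(p)` and `A` is uniform, then
`I(A;B) = 1 - ε < 1 - h₂(p) = I(A;E)`. -/
theorem bec_more_capable_than_bsc (p ε : ℝ)
    (hp : p ∈ Set.Icc (0 : ℝ) (1 / 2)) (hε : ε ∈ Set.Icc (0 : ℝ) 1) :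
    (ε ≤ h2 p → ∀ qA : Bool → ℝ, IsPMF qA →
      MI (fun x : Bool × Option Bool × Bool => qA x.1 * BEC ε x.1 x.2.1 * BSC p x.1 x.2.2)
          (fun ω => ω.1) (fun ω => ω.2.2)
        ≤ MI (fun x : Bool × Option Bool × Bool => qA x.1 * BEC ε x.1 x.2.1 * BSC p x.1 x.2.2)
          (fun ω => ω.1) (fun ω => ω.2.1)) ∧
    (h2 p < ε →
      MI (binSrc p ε) (fun ω => ω.1) (fun ω => ω.2.1) = 1 - ε ∧
      (1 - ε : ℝ) < 1 - h2 p ∧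
      1 - h2 p = MI (binSrc p ε) (fun ω => ω.1) (fun ω => ω.2.2)) := by
  obtain ⟨hp0, hp2⟩ := hp
  obtain ⟨he0, he1⟩ := hε
  constructor
  · intro hεh qA hPMF
    obtain ⟨hnn, hsum⟩ := hPMF
    have h1 : qA false = 1 - qA true := by
      rw [Fintype.sum_bool] at hsum; linarith
    have h0 := hnn true
    have h0f := hnn false
    have hq1 : qA true ≤ 1 := by linarith
    have hWq : (fun x : Bool × Option Bool × Bool =>
        qA x.1 * BEC ε x.1 x.2.1 * BSC p x.1 x.2.2) = Wgt p ε qA := rfl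
    rw [hWq, MI_AE p ε hp0 (by linarith) qA h0 h0f h1, MI_AB p ε he0 he1 qA h0 h0f h1]
    have hkey := key p (qA true) hp0 hp2 h0 hq1
    have hnn2 : 0 ≤ h2 (qA true) := h2_nonneg h0 hq1
    nlinarith [mul_le_mul_of_nonneg_left hεh hnn2]
  · intro hlt
    have hW : binSrc p ε = Wgt p ε (fun _ => 1/2) := rfl
    refine ⟨?_, by linarith, ?_⟩
    · rw [hW, MI_AB p ε he0 he1 _ (by norm_num) (by norm_num) (by norm_num)]
      norm_num [h2_half]
    · rw [hW, MI_AE p ε hp0 (by linarith) _ (by norm_num) (by norm_num) (by norm_num)]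
      have hsop : sop ((fun _ : Bool => (1:ℝ)/2) true) p = 1/2 := by rw [sop]; ring
      rw [hsop, h2_half]

end SLSC

end
end

section
/- Achievability computations for the binary example: let p ∈ [0,1/2], ε ∈ [0,1], α, β ∈ [0,1/2]. Let A be uniform on {0,1}; let V = A ⊕ Z_α and U = V ⊕ Z_β, where Z_α, Z_β are Bernoulli(α) and Bernoulli(β) respectively; let B = BEC(ε)(A) and E = A ⊕ N_p with N_p Bernoulli(p), where A, Z_α, Z_β, N_p and the erasure event are mutually independent (so that U–V–A–(B,E) is a Markov chain). Define Â : {0,1}×{0,e,1} → {0,1} by Â(v,b) = b if b ∈ {0,1} and Â(v,e) = v, and let d be Hamming distortion. Then (i) I(V;A|B) = ε(1 − h₂(α)); (ii) E[d(A, Â(V,B))] = εα; and (iii) H(A|V,B) + I(A;B|U) − I(A;E|U) = ε h₂(α) + (1−ε) h₂(α⋆β) − h₂(p⋆α⋆β) + h₂(p), with in particular H(A|V,B) = ε h₂(α), I(A;B|U) = (1−ε) h₂(α⋆β), and I(A;E|U) = h₂(p⋆α⋆β) − h₂(p). -/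
noncomputable section

namespace SLSC

open scoped BigOperators

variable {Ω : Type*} [Fintype Ω]

variable {𝒜 ℬ ℰ : Type*} [Fintype 𝒜] [Fintype ℬ] [Fintype ℰ]

section AuxLemmas
set_option linter.unnecessarySeqFocus false
set_option linter.unusedTactic false

noncomputable def Lf (x : ℝ) : ℝ := x * Real.logb 2 x
lemma Lf_mul (a b : ℝ) : Lf (a * b) = b * Lf a + a * Lf b := by
  rcases eq_or_ne a 0 with h | h
  · simp [Lf, h]
  rcases eq_or_ne b 0 with h' | h'
  · simp [Lf, h']
  · simp only [Lf, Real.logb, Real.log_mul h h']; ring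
lemma Lf_zero : Lf 0 = 0 := by simp [Lf]
lemma Lf_half : Lf (1/2 : ℝ) = -(1/2) := by
  have : Real.logb 2 (1/2 : ℝ) = -1 := by
    rw [show (1:ℝ)/2 = 2⁻¹ by norm_num, Real.logb_inv, Real.logb_self_eq_one] <;> norm_num
  simp [Lf, this]
lemma Lf_two_inv : Lf (2⁻¹ : ℝ) = -(1/2) := by
  rw [show (2⁻¹:ℝ) = 1/2 by norm_num]; exact Lf_half
lemma h2_eq (x : ℝ) : h2 x = -Lf x - Lf (1-x) := rfl
lemma H_eq {Ω X : Type*} [Fintype Ω] [Fintype X] (w : Ω → ℝ) (f : Ω → X) :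
    H w f = -∑ x, Lf (pr w f x) := rfl

variable (p ε α β : ℝ)

lemma prB (b : Option Bool) : pr (exJoint p ε α β) (fun ω => ω.2.2.2.1) b =
    match b with
    | some _ => (1-ε) * (1/2)
    | none => ε := by
  rcases b with _ | b' <;> try cases b'
  all_goals
    simp [pr, exJoint, BSC, BEC, Fintype.sum_prod_type, Fintype.sum_option, Fintype.sum_bool]
  all_goals ring

lemma prVB (v : Bool) (b : Option Bool) :
    pr (exJoint p ε α β) (fun ω => (ω.2.1, ω.2.2.2.1)) (v, b) =
    match b with
    | some b' => (if v = b' then 1-α else α) * ((1-ε) * (1/2))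
    | none => ε * (1/2) := by
  cases v <;> (rcases b with _ | b' <;> try cases b')
  all_goals
    simp [pr, exJoint, BSC, BEC, Fintype.sum_prod_type, Fintype.sum_option, Fintype.sum_bool]
  all_goals ring

lemma prAB (a : Bool) (b : Option Bool) :
    pr (exJoint p ε α β) (fun ω => (ω.2.2.1, ω.2.2.2.1)) (a, b) =
    match b with
    | some b' => if a = b' then (1-ε) * (1/2) else 0
    | none => ε * (1/2) := by
  cases a <;> (rcases b with _ | b' <;> try cases b')
  all_goals
    simp [pr, exJoint, BSC, BEC, Fintype.sum_prod_type, Fintype.sum_option, Fintype.sum_bool]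
  all_goals ring

lemma prVAB (v a : Bool) (b : Option Bool) :
    pr (exJoint p ε α β) (fun ω => (ω.2.1, (ω.2.2.1, ω.2.2.2.1))) (v, (a, b)) =
    match b with
    | some b' => if a = b' then (if v = a then 1-α else α) * ((1-ε) * (1/2)) else 0
    | none => (if v = a then 1-α else α) * (ε * (1/2)) := by
  cases v <;> cases a <;> (rcases b with _ | b' <;> try cases b')
  all_goals
    simp [pr, exJoint, BSC, BEC, Fintype.sum_prod_type, Fintype.sum_option, Fintype.sum_bool]
  all_goals ring

lemma prA_VB (a v : Bool) (b : Option Bool) :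
    pr (exJoint p ε α β) (fun ω => (ω.2.2.1, (ω.2.1, ω.2.2.2.1))) (a, (v, b)) =
    match b with
    | some b' => if a = b' then (if v = a then 1-α else α) * ((1-ε) * (1/2)) else 0
    | none => (if v = a then 1-α else α) * (ε * (1/2)) := by
  cases v <;> cases a <;> (rcases b with _ | b' <;> try cases b')
  all_goals
    simp [pr, exJoint, BSC, BEC, Fintype.sum_prod_type, Fintype.sum_option, Fintype.sum_bool]
  all_goals ring

lemma prU (u : Bool) : pr (exJoint p ε α β) (fun ω => ω.1) u = 1/2 := by
  cases u
  all_goals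
    simp [pr, exJoint, BSC, BEC, Fintype.sum_prod_type, Fintype.sum_option, Fintype.sum_bool]
  all_goals ring

lemma prAU (a u : Bool) :
    pr (exJoint p ε α β) (fun ω => (ω.2.2.1, ω.1)) (a, u) =
    (if u = a then 1 - sop α β else sop α β) * (1/2) := by
  cases a <;> cases u
  all_goals
    simp [pr, exJoint, BSC, BEC, sop, Fintype.sum_prod_type, Fintype.sum_option, Fintype.sum_bool]
  all_goals ring

lemma prBU (b : Option Bool) (u : Bool) :
    pr (exJoint p ε α β) (fun ω => (ω.2.2.2.1, ω.1)) (b, u) =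
    match b with
    | some b' => (if u = b' then 1 - sop α β else sop α β) * ((1-ε) * (1/2))
    | none => ε * (1/2) := by
  cases u <;> (rcases b with _ | b' <;> try cases b')
  all_goals
    simp [pr, exJoint, BSC, BEC, sop, Fintype.sum_prod_type, Fintype.sum_option, Fintype.sum_bool]
  all_goals ring

lemma prABU (a : Bool) (b : Option Bool) (u : Bool) :
    pr (exJoint p ε α β) (fun ω => (ω.2.2.1, (ω.2.2.2.1, ω.1))) (a, (b, u)) =
    match b with
    | some b' => if a = b' then (if u = a then 1 - sop α β else sop α β) * ((1-ε) * (1/2)) else 0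
    | none => (if u = a then 1 - sop α β else sop α β) * (ε * (1/2)) := by
  cases a <;> cases u <;> (rcases b with _ | b' <;> try cases b')
  all_goals
    simp [pr, exJoint, BSC, BEC, sop, Fintype.sum_prod_type, Fintype.sum_option, Fintype.sum_bool]
  all_goals ring

lemma prEU (e u : Bool) :
    pr (exJoint p ε α β) (fun ω => (ω.2.2.2.2, ω.1)) (e, u) =
    (if u = e then 1 - sop p (sop α β) else sop p (sop α β)) * (1/2) := by
  cases e <;> cases u
  all_goals
    simp [pr, exJoint, BSC, BEC, sop, Fintype.sum_prod_type, Fintype.sum_option, Fintype.sum_bool]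
  all_goals ring

lemma prAEU (a e u : Bool) :
    pr (exJoint p ε α β) (fun ω => (ω.2.2.1, (ω.2.2.2.2, ω.1))) (a, (e, u)) =
    (if e = a then 1-p else p) * ((if u = a then 1 - sop α β else sop α β) * (1/2)) := by
  cases a <;> cases e <;> cases u
  all_goals
    simp [pr, exJoint, BSC, BEC, sop, Fintype.sum_prod_type, Fintype.sum_option, Fintype.sum_bool]
  all_goals ring

end AuxLemmas
section MarkovAux
variable (p ε α β : ℝ)

lemma prFull (x1 x2 y : Bool) (z1 : Option Bool) (z2 : Bool) :
    pr (exJoint p ε α β)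
      (fun ω => ((ω.1, ω.2.1), ω.2.2.1, ω.2.2.2)) ((x1,x2),y,(z1,z2))
    = exJoint p ε α β (x1,x2,y,z1,z2) := by
  unfold pr
  rw [Finset.sum_eq_single (x1,x2,y,z1,z2)]
  · simp
  · rintro ⟨b1,b2,b3,b4,b5⟩ - hne
    rw [if_neg]
    simp only [Prod.mk.injEq]
    rintro ⟨⟨rfl,rfl⟩,rfl,rfl,rfl⟩
    exact hne rfl
  · intro h; exact absurd (Finset.mem_univ _) h

lemma prUVA (x y z : Bool) :
    pr (exJoint p ε α β) (fun ω => (ω.1, ω.2.1, ω.2.2.1)) (x, y, z)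
      = 1/2 * BSC α z y * BSC β y x := by
  cases x <;> cases y <;> cases z
  all_goals
    simp [pr, exJoint, BSC, BEC, Fintype.sum_prod_type, Fintype.sum_option, Fintype.sum_bool]
  all_goals ring

lemma prV (y : Bool) : pr (exJoint p ε α β) (fun ω => ω.2.1) y = 1/2 := by
  cases y
  all_goals
    simp [pr, exJoint, BSC, BEC, Fintype.sum_prod_type, Fintype.sum_option, Fintype.sum_bool]
  all_goals ring

lemma prUV (x y : Bool) :
    pr (exJoint p ε α β) (fun ω => (ω.1, ω.2.1)) (x, y) = 1/2 * BSC β y x := by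
  cases x <;> cases y
  all_goals
    simp [pr, exJoint, BSC, BEC, Fintype.sum_prod_type, Fintype.sum_option, Fintype.sum_bool]
  all_goals ring

lemma prVA (y z : Bool) :
    pr (exJoint p ε α β) (fun ω => (ω.2.1, ω.2.2.1)) (y, z) = 1/2 * BSC α z y := by
  cases y <;> cases z
  all_goals
    simp [pr, exJoint, BSC, BEC, Fintype.sum_prod_type, Fintype.sum_option, Fintype.sum_bool]
  all_goals ring

lemma prA_s19 (y : Bool) : pr (exJoint p ε α β) (fun ω => ω.2.2.1) y = 1/2 := by
  cases y
  all_goals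
    simp [pr, exJoint, BSC, BEC, Fintype.sum_prod_type, Fintype.sum_option, Fintype.sum_bool]
  all_goals ring

lemma prUV_A (x1 x2 y : Bool) :
    pr (exJoint p ε α β) (fun ω => ((ω.1, ω.2.1), ω.2.2.1)) ((x1, x2), y)
      = 1/2 * BSC α y x2 * BSC β x2 x1 := by
  cases x1 <;> cases x2 <;> cases y
  all_goals
    simp [pr, exJoint, BSC, BEC, Fintype.sum_prod_type, Fintype.sum_option, Fintype.sum_bool]
  all_goals ring

lemma prA_BE (y : Bool) (z1 : Option Bool) (z2 : Bool) :
    pr (exJoint p ε α β) (fun ω => (ω.2.2.1, (ω.2.2.2.1, ω.2.2.2.2))) (y, (z1, z2))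
      = 1/2 * BEC ε y z1 * BSC p y z2 := by
  cases y <;> cases z2 <;> (rcases z1 with _ | z1 <;> try cases z1)
  all_goals
    simp [pr, exJoint, BSC, BEC, Fintype.sum_prod_type, Fintype.sum_option, Fintype.sum_bool]
  all_goals ring

end MarkovAux
set_option maxHeartbeats 1000000 in
/-- **Achievability computations for the binary example**: with `A` uniform,
`V = A ⊕ Z_α`, `U = V ⊕ Z_β`, `B = BEC(ε)(A)`, `E = A ⊕ N_p` (all noises mutually
independent) and `Â(v,b) = b` if `b ∈ {0,1}`, `Â(v,e) = v`:
`U – V – A – (B,E)` is a Markov chain, `I(V;A|B) = ε(1 - h₂(α))`,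
`E[d(A,Â(V,B))] = εα`, `H(A|V,B) = ε h₂(α)`, `I(A;B|U) = (1-ε) h₂(α⋆β)`,
`I(A;E|U) = h₂(p⋆α⋆β) - h₂(p)`, and therefore
`H(A|V,B) + I(A;B|U) - I(A;E|U) = ε h₂(α) + (1-ε) h₂(α⋆β) - h₂(p⋆α⋆β) + h₂(p)`. -/
theorem binary_achievability_computations (p ε α β : ℝ)
    (hp : p ∈ Set.Icc (0 : ℝ) (1 / 2)) (hε : ε ∈ Set.Icc (0 : ℝ) 1)
    (hα : α ∈ Set.Icc (0 : ℝ) (1 / 2)) (hβ : β ∈ Set.Icc (0 : ℝ) (1 / 2)) :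
    Markov4 (exJoint p ε α β) (fun ω => ω.1) (fun ω => ω.2.1)
        (fun ω => ω.2.2.1) (fun ω => ω.2.2.2) ∧
    condMI (exJoint p ε α β) (fun ω => ω.2.1) (fun ω => ω.2.2.1)
        (fun ω => ω.2.2.2.1) = ε * (1 - h2 α) ∧
    expect (exJoint p ε α β)
        (fun ω => hamming ω.2.2.1 ((ω.2.2.2.1).getD ω.2.1)) = ε * α ∧
    condH (exJoint p ε α β) (fun ω => ω.2.2.1) (fun ω => (ω.2.1, ω.2.2.2.1))
        = ε * h2 α ∧
    condMI (exJoint p ε α β) (fun ω => ω.2.2.1) (fun ω => ω.2.2.2.1) (fun ω => ω.1)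
        = (1 - ε) * h2 (sop α β) ∧
    condMI (exJoint p ε α β) (fun ω => ω.2.2.1) (fun ω => ω.2.2.2.2) (fun ω => ω.1)
        = h2 (sop p (sop α β)) - h2 p ∧
    condH (exJoint p ε α β) (fun ω => ω.2.2.1) (fun ω => (ω.2.1, ω.2.2.2.1))
        + condMI (exJoint p ε α β) (fun ω => ω.2.2.1) (fun ω => ω.2.2.2.1) (fun ω => ω.1)
        - condMI (exJoint p ε α β) (fun ω => ω.2.2.1) (fun ω => ω.2.2.2.2) (fun ω => ω.1)
      = ε * h2 α + (1 - ε) * h2 (sop α β) - h2 (sop p (sop α β)) + h2 p := by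
  have h1 : Markov4 (exJoint p ε α β) (fun ω => ω.1) (fun ω => ω.2.1)
      (fun ω => ω.2.2.1) (fun ω => ω.2.2.2) := by
    constructor
    · intro x y z
      simp only [prUVA, prV, prUV, prVA]
      ring
    · intro x y z
      obtain ⟨x1, x2⟩ := x
      obtain ⟨z1, z2⟩ := z
      simp only [prFull, prUV_A, prA_s19, prA_BE, exJoint]
      ring
  have h2' : condMI (exJoint p ε α β) (fun ω => ω.2.1) (fun ω => ω.2.2.1) (fun ω => ω.2.2.2.1)
      = ε * (1 - h2 α) := by
    simp [condMI, condH, H_eq, Fintype.sum_prod_type, Fintype.sum_option, Fintype.sum_bool,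
      prVB, prB, prVAB, prAB]
    simp only [h2_eq, Lf_mul, Lf_zero, Lf_half, Lf_two_inv]
    ring
  have h3 : expect (exJoint p ε α β)
      (fun ω => hamming ω.2.2.1 ((ω.2.2.2.1).getD ω.2.1)) = ε * α := by
    simp [expect, exJoint, hamming, BSC, BEC, Fintype.sum_prod_type, Fintype.sum_option,
      Fintype.sum_bool]
    ring
  have h4 : condH (exJoint p ε α β) (fun ω => ω.2.2.1) (fun ω => (ω.2.1, ω.2.2.2.1))
      = ε * h2 α := by
    simp [condH, H_eq, Fintype.sum_prod_type, Fintype.sum_option, Fintype.sum_bool,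
      prA_VB, prVB]
    simp only [h2_eq, Lf_mul, Lf_zero, Lf_half, Lf_two_inv]
    ring
  have h5 : condMI (exJoint p ε α β) (fun ω => ω.2.2.1) (fun ω => ω.2.2.2.1) (fun ω => ω.1)
      = (1 - ε) * h2 (sop α β) := by
    simp [condMI, condH, H_eq, Fintype.sum_prod_type, Fintype.sum_option, Fintype.sum_bool,
      prAU, prU, prABU, prBU]
    simp only [h2_eq, Lf_mul, Lf_zero, Lf_half, Lf_two_inv]
    ring
  have h6 : condMI (exJoint p ε α β) (fun ω => ω.2.2.1) (fun ω => ω.2.2.2.2) (fun ω => ω.1)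
      = h2 (sop p (sop α β)) - h2 p := by
    simp [condMI, condH, H_eq, Fintype.sum_prod_type, Fintype.sum_option, Fintype.sum_bool,
      prAU, prU, prAEU, prEU]
    simp only [h2_eq, Lf_mul, Lf_zero, Lf_half, Lf_two_inv]
    ring
  refine ⟨h1, h2', h3, h4, h5, h6, ?_⟩
  rw [h4, h5, h6]
  ring

end SLSC

end
end
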